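/- arXiv:1603.02592 — 2 statements merged into one kernel-verified Lean document; each statement's English description precedes it below -/
import Mathlib

section
/- Basis theorem for confluent normalizing linear rewriting: let R be a linear rewriting system on V whose rewriting-step relation is confluent and normalizing. Let M₀ = {m ∈ M | no rule of R has source m} be the set of monomials in normal form. Then the family (τ(m))_{m ∈ M₀} of images of the normal-form monomials is a basis of the quotient vector space V/W. -/
/-- One rewriting step of the linear rewriting system `R` on the free `K`-vector space
`M →₀ K`. -/
def LinStep {K M : Type*} [Field K] (R : Set (M × (M →₀ K))) (a b : M →₀ K) : Prop :=
  ∃ r ∈ R, ∃ lam : K, lam ≠ 0 ∧ ∃ v : M →₀ K,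
    r.1 ∉ v.support ∧ a = Finsupp.single r.1 lam + v ∧ b = lam • r.2 + v

/-- The subspace `W` of `V = M →₀ K` spanned by the vectors `m - w` for the rules
`(m, w) ∈ R`; the quotient `V ⧸ W` is the hom-space of the presented linear category. -/
noncomputable def RelSpan {K M : Type*} [Field K] (R : Set (M × (M →₀ K))) : Submodule K (M →₀ K) :=
  Submodule.span K ((fun r : M × (M →₀ K) => Finsupp.single r.1 (1 : K) - r.2) '' R)

namespace LinRW

variable {K M : Type*} [Field K] {R : Set (M × (M →₀ K))}

/-- The total "reduce at rule `p`" map; it is linear in `x`. -/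
noncomputable def linRed (p : M × (M →₀ K)) (x : M →₀ K) : M →₀ K :=
  x + x p.1 • p.2 - x p.1 • Finsupp.single p.1 1

lemma linRed_add (p : M × (M →₀ K)) (x y : M →₀ K) :
    linRed p (x + y) = linRed p x + linRed p y := by
  simp only [linRed, Finsupp.add_apply, add_smul]
  abel

lemma linRed_smul (p : M × (M →₀ K)) (c : K) (x : M →₀ K) :
    linRed p (c • x) = c • linRed p x := by
  simp only [linRed, Finsupp.smul_apply, smul_eq_mul, mul_smul, smul_sub, smul_add]

lemma linStep_iff {a b : M →₀ K} :
    LinStep R a b ↔ ∃ p ∈ R, a p.1 ≠ 0 ∧ b = linRed p a := by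
  constructor
  · rintro ⟨p, hp, lam, hlam, v, hv, rfl, rfl⟩
    have hv0 : v p.1 = 0 := Finsupp.notMem_support_iff.mp hv
    have ha : (Finsupp.single p.1 lam + v) p.1 = lam := by
      simp [Finsupp.add_apply, hv0]
    refine ⟨p, hp, by simp [ha, hlam], ?_⟩
    simp only [linRed, ha]
    have h1 : lam • Finsupp.single p.1 (1 : K) = Finsupp.single p.1 lam := by
      simp [Finsupp.smul_single']
    rw [h1]; abel
  · rintro ⟨p, hp, hne, rfl⟩
    refine ⟨p, hp, a p.1, hne, a.erase p.1, ?_, ?_, ?_⟩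
    · simp [Finsupp.mem_support_iff]
    · exact (Finsupp.single_add_erase p.1 a).symm
    · ext x
      rcases eq_or_ne x p.1 with rfl | hx
      · simp [linRed]
      · simp [linRed, Finsupp.single_apply, Ne.symm hx, Finsupp.erase_ne hx]; ring

lemma rtg_linRed {p : M × (M →₀ K)} (hp : p ∈ R) (x : M →₀ K) :
    Relation.ReflTransGen (LinStep R) x (linRed p x) := by
  rcases eq_or_ne (x p.1) 0 with h | h
  · have : linRed p x = x := by simp [linRed, h]
    rw [this]
  · exact Relation.ReflTransGen.single (linStep_iff.mpr ⟨p, hp, h, rfl⟩)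

lemma nrm_iff {a : M →₀ K} :
    (∀ b, ¬ LinStep R a b) ↔ ∀ p ∈ R, a p.1 = 0 := by
  constructor
  · intro h p hp
    by_contra hne
    exact h _ (linStep_iff.mpr ⟨p, hp, hne, rfl⟩)
  · rintro h b ⟨p, hp, lam, hlam, v, hv, rfl, rfl⟩
    have hv0 : v p.1 = 0 := Finsupp.notMem_support_iff.mp hv
    have := h p hp
    simp [Finsupp.add_apply, hv0] at this
    exact hlam this

lemma nrm_zero : ∀ b, ¬ LinStep R (0 : M →₀ K) b :=
  nrm_iff.mpr (by simp)

lemma rtg_of_nrm {n d : M →₀ K} (hn : ∀ b, ¬ LinStep R n b)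
    (h : Relation.ReflTransGen (LinStep R) n d) : d = n := by
  rcases h.cases_head with rfl | ⟨c, hc, _⟩
  · rfl
  · exact absurd hc (hn c)

lemma rtg_add {a c : M →₀ K} (h : Relation.ReflTransGen (LinStep R) a c) (b : M →₀ K) :
    ∃ d, Relation.ReflTransGen (LinStep R) (a + b) (c + d) ∧
      Relation.ReflTransGen (LinStep R) b d := by
  induction h with
  | refl => exact ⟨b, .refl, .refl⟩
  | tail h1 h2 ih =>
    obtain ⟨d, hd1, hd2⟩ := ih
    obtain ⟨p, hp, -, rfl⟩ := linStep_iff.mp h2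
    exact ⟨linRed p d,
      hd1.trans (by rw [← linRed_add]; exact rtg_linRed hp _),
      hd2.trans (rtg_linRed hp _)⟩

lemma rtg_smul {a b : M →₀ K} {c : K} (hc : c ≠ 0)
    (h : Relation.ReflTransGen (LinStep R) a b) :
    Relation.ReflTransGen (LinStep R) (c • a) (c • b) := by
  induction h with
  | refl => exact .refl
  | tail h1 h2 ih =>
    obtain ⟨p, hp, hne, rfl⟩ := linStep_iff.mp h2
    refine ih.tail (linStep_iff.mpr ⟨p, hp, ?_, (linRed_smul p c _).symm⟩)
    simp only [Finsupp.smul_apply, smul_eq_mul]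
    exact mul_ne_zero hc hne

lemma rtg_sub_mem {a b : M →₀ K} (h : Relation.ReflTransGen (LinStep R) a b) :
    a - b ∈ RelSpan R := by
  induction h with
  | refl => rw [sub_self]; exact (RelSpan R).zero_mem
  | tail h1 h2 ih =>
    rename_i b' c
    obtain ⟨p, hp, lam, hlam, v, hv, hb', hc⟩ := h2
    have hdiff : b' - c = lam • (Finsupp.single p.1 (1 : K) - p.2) := by
      rw [hb', hc, smul_sub]
      have h1 : lam • Finsupp.single p.1 (1 : K) = Finsupp.single p.1 lam := by
        simp [Finsupp.smul_single']
      rw [h1]; abel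
    have hmem : b' - c ∈ RelSpan R := by
      rw [hdiff]
      exact Submodule.smul_mem _ _ (Submodule.subset_span ⟨p, hp, rfl⟩)
    have : a - c = (a - b') + (b' - c) := by abel
    rw [this]
    exact (RelSpan R).add_mem ih hmem


section Confluent

variable (hconf : ∀ a b c : M →₀ K, Relation.ReflTransGen (LinStep R) a b →
      Relation.ReflTransGen (LinStep R) a c →
      ∃ d : M →₀ K, Relation.ReflTransGen (LinStep R) b d ∧
        Relation.ReflTransGen (LinStep R) c d)

include hconf

/-- If `a →* b` and `a →* c` with `c` a normal form, then `b →* c`. -/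
lemma join_eq {a b c : M →₀ K} (hNc : ∀ x, ¬ LinStep R c x)
    (hab : Relation.ReflTransGen (LinStep R) a b)
    (hac : Relation.ReflTransGen (LinStep R) a c) :
    Relation.ReflTransGen (LinStep R) b c := by
  obtain ⟨d, hd1, hd2⟩ := hconf a b c hab hac
  rwa [rtg_of_nrm hNc hd2] at hd1

variable (hnorm : ∀ a : M →₀ K, (∀ b : M →₀ K, ¬ LinStep R a b) ∨
      ∃ b : M →₀ K, Relation.TransGen (LinStep R) a b ∧ ∀ c : M →₀ K, ¬ LinStep R b c)

include hnorm

omit hconf in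
lemma exists_nf (a : M →₀ K) :
    ∃ n : M →₀ K, Relation.ReflTransGen (LinStep R) a n ∧ ∀ b, ¬ LinStep R n b := by
  rcases hnorm a with h | ⟨b, hb, hNb⟩
  · exact ⟨a, .refl, h⟩
  · exact ⟨b, hb.to_reflTransGen, hNb⟩

/-- Every element of the subspace of relations rewrites to `0`. -/
lemma rtg_zero_of_mem {x : M →₀ K} (hx : x ∈ RelSpan R) :
    Relation.ReflTransGen (LinStep R) x 0 := by
  refine Submodule.span_induction
    (p := fun x _ => Relation.ReflTransGen (LinStep R) x 0) ?_ .refl ?_ ?_ hx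
  · rintro g ⟨p, hpR, rfl⟩
    obtain ⟨n, hmn, hNn⟩ := exists_nf hnorm (Finsupp.single p.1 (1 : K))
    have hstep : LinStep R (Finsupp.single p.1 (1 : K)) p.2 := by
      refine linStep_iff.mpr ⟨p, hpR, by simp, ?_⟩
      ext x
      simp [linRed]
    have hwn : Relation.ReflTransGen (LinStep R) p.2 n :=
      join_eq hconf hNn (Relation.ReflTransGen.single hstep) hmn
    have hNneg : ∀ b, ¬ LinStep R (-n) b :=
      nrm_iff.mpr fun q hq => by simp [nrm_iff.mp hNn q hq]
    have hnegw : Relation.ReflTransGen (LinStep R) (-p.2) (-n) := by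
      have := rtg_smul (c := (-1 : K)) (by norm_num) hwn
      simp only [neg_smul, one_smul, neg_neg] at this; exact this
    obtain ⟨d, hd1, hd2⟩ := rtg_add hmn (-p.2)
    have hdneg : Relation.ReflTransGen (LinStep R) d (-n) :=
      join_eq hconf hNneg hd2 hnegw
    obtain ⟨q, hq1, hq2⟩ := rtg_add hdneg n
    rw [rtg_of_nrm hNn hq2, neg_add_cancel] at hq1
    have h0 : Relation.ReflTransGen (LinStep R)
        (Finsupp.single p.1 (1 : K) - p.2) (d + n) := by
      rw [sub_eq_add_neg]
      rw [add_comm n d] at hd1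
      exact hd1
    exact h0.trans hq1
  · intro x y _ _ hrx hry
    obtain ⟨d, hd1, hd2⟩ := rtg_add hrx y
    have hd0 : Relation.ReflTransGen (LinStep R) d 0 :=
      join_eq hconf nrm_zero hd2 hry
    rw [zero_add] at hd1
    exact hd1.trans hd0
  · intro c x _ hrx
    rcases eq_or_ne c 0 with rfl | hc
    · rw [zero_smul]
    · have := rtg_smul hc hrx; rwa [smul_zero] at this

end Confluent

end LinRW

open LinRW

/-- Basis theorem for confluent normalizing linear rewriting: if the rewriting-step
relation of `R` is confluent and normalizing, then the images under the quotient map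
`τ : V → V ⧸ W` of the monomials in normal form (those which are the source of no rule)
form a basis of `V ⧸ W`: they are linearly independent and they span. -/
theorem basis_of_normal_forms {K M : Type*} [Field K] (R : Set (M × (M →₀ K)))
    (hconf : ∀ a b c : M →₀ K, Relation.ReflTransGen (LinStep R) a b →
      Relation.ReflTransGen (LinStep R) a c →
      ∃ d : M →₀ K, Relation.ReflTransGen (LinStep R) b d ∧
        Relation.ReflTransGen (LinStep R) c d)
    (hnorm : ∀ a : M →₀ K, (∀ b : M →₀ K, ¬ LinStep R a b) ∨
      ∃ b : M →₀ K, Relation.TransGen (LinStep R) a b ∧ ∀ c : M →₀ K, ¬ LinStep R b c) :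
    LinearIndependent K
      (fun m : {m : M // ∀ w : M →₀ K, (m, w) ∉ R} =>
        Submodule.Quotient.mk (p := RelSpan R) (Finsupp.single m.1 (1 : K))) ∧
    Submodule.span K
      (Set.range fun m : {m : M // ∀ w : M →₀ K, (m, w) ∉ R} =>
        Submodule.Quotient.mk (p := RelSpan R) (Finsupp.single m.1 (1 : K))) = ⊤ := by
  classical
  constructor
  · rw [linearIndependent_iff]
    intro l hl
    have key : Finsupp.linearCombination K
        (fun m : {m : M // ∀ w : M →₀ K, (m, w) ∉ R} =>
          Submodule.Quotient.mk (p := RelSpan R) (Finsupp.single m.1 (1 : K))) l =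
        Submodule.Quotient.mk (p := RelSpan R) (Finsupp.mapDomain Subtype.val l) := by
      rw [Finsupp.linearCombination_apply, Finsupp.mapDomain, ← Submodule.mkQ_apply,
        map_finsuppSum]
      refine Finsupp.sum_congr fun s _ => ?_
      rw [Submodule.mkQ_apply, ← Submodule.Quotient.mk_smul, Finsupp.smul_single', mul_one]
    rw [key, Submodule.Quotient.mk_eq_zero] at hl
    have hNx : ∀ b, ¬ LinStep R (Finsupp.mapDomain Subtype.val l) b := by
      refine nrm_iff.mpr ?_
      rintro ⟨pm, pw⟩ hp
      refine Finsupp.mapDomain_notin_range _ _ ?_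
      rintro ⟨s, hs⟩
      exact s.2 pw (by rwa [hs])
    have h0 : (0 : M →₀ K) = Finsupp.mapDomain Subtype.val l :=
      rtg_of_nrm hNx (rtg_zero_of_mem hconf hnorm hl)
    have := Finsupp.mapDomain_injective (Subtype.val_injective)
      (a₁ := l) (a₂ := 0) (by rw [Finsupp.mapDomain_zero, ← h0])
    exact this
  · rw [eq_top_iff]
    rintro y -
    obtain ⟨a, rfl⟩ := Submodule.Quotient.mk_surjective (RelSpan R) y
    obtain ⟨n, han, hNn⟩ := exists_nf (R := R) hnorm a
    have hmk : Submodule.Quotient.mk (p := RelSpan R) a = Submodule.Quotient.mk n :=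
      (Submodule.Quotient.eq _).mpr (rtg_sub_mem han)
    have hrepr : Submodule.Quotient.mk (p := RelSpan R) n =
        n.sum fun m c => c • Submodule.Quotient.mk (p := RelSpan R)
          (Finsupp.single m (1 : K)) := by
      conv_lhs => rw [← Finsupp.sum_single n]
      rw [← Submodule.mkQ_apply, map_finsuppSum]
      refine Finsupp.sum_congr fun m _ => ?_
      rw [Submodule.mkQ_apply, ← Submodule.Quotient.mk_smul, Finsupp.smul_single', mul_one]
    rw [hmk, hrepr]
    refine Submodule.finsuppSum_mem K _ _ _ ?_
    intro m hm
    have hm0 : ∀ w : M →₀ K, (m, w) ∉ R := fun w hw => hm (nrm_iff.mp hNn (m, w) hw)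
    exact Submodule.smul_mem _ _ (Submodule.subset_span ⟨⟨m, hm0⟩, rfl⟩)
end

section
/- Concatenation formula for the word measure: for all words σ₁, σ₂ over P, |σ₁σ₂| = |σ₁| + |σ₂|^{(σ₁)}, where σ₁σ₂ denotes the concatenation of σ₁ and σ₂. -/
/-- The measure of a word over `P` with respect to a strict order `lt` on `P`,
valued in finitely supported multisets `P →₀ ℕ`: `|ε| = 0` and
`|I σ| = δ_I + |σ^(I)|`, where `σ^(I)` is `σ` with every letter `lt`-below `I`
removed. -/
noncomputable def wordMeas {P : Type*} (lt : P → P → Prop) : List P → (P →₀ ℕ)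
  | [] => 0
  | I :: σ =>
      Finsupp.single I 1 +
        wordMeas lt (σ.filter fun J => @decide (¬ lt J I) (Classical.propDecidable _))
termination_by l => l.length
decreasing_by
  simp only [List.length_cons]
  refine Nat.lt_succ_of_le ?_
  first
  | exact List.length_filter_le _ _
  | (simp only [List.length_unattach]; exact (List.length_filter_le _ _).trans (le_of_eq List.length_attach))
  | simpa using List.length_filter_le _ σ.attach
  | (simp only [List.length_unattach]; exact (List.length_filter_le _ _).trans (by simp))

open Classical in
/-- The restriction `ν^(σ)` of a multiset `ν : P →₀ ℕ` along a word `σ`: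
`ν^(σ)(K) = 0` if `K` is `lt`-below some letter occurring in `|σ|`, and
`ν^(σ)(K) = ν K` otherwise. -/
noncomputable def measRestr {P : Type*} (lt : P → P → Prop) (σ : List P)
    (ν : P →₀ ℕ) : P →₀ ℕ :=
  Finsupp.filter (fun K => ¬ ∃ I : P, wordMeas lt σ I ≠ 0 ∧ lt K I) ν

section Aux

variable {P : Type*} (lt : P → P → Prop)

private lemma wordMeas_cons (I : P) (σ : List P) :
    wordMeas lt (I :: σ) = Finsupp.single I 1 +
      wordMeas lt (σ.filter fun J => @decide (¬ lt J I) (Classical.propDecidable _)) := by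
  rw [wordMeas]

private theorem wm_support_mem :
    ∀ (σ : List P) (K : P), wordMeas lt σ K ≠ 0 → K ∈ σ
  | [], K, h => by simp [wordMeas] at h
  | I :: σ, K, h => by
    rw [wordMeas_cons] at h
    rcases eq_or_ne K I with rfl | hne
    · exact List.mem_cons_self
    · have h0 : (Finsupp.single I 1 : P →₀ ℕ) K = 0 :=
        Finsupp.single_eq_of_ne' (Ne.symm hne)
      rw [Finsupp.add_apply, h0, zero_add] at h
      have := wm_support_mem _ K h
      exact List.mem_cons_of_mem _ (List.mem_filter.mp this).1
termination_by σ => σ.length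
decreasing_by
  simp only [List.length_cons]
  exact Nat.lt_succ_of_le (List.length_filter_le _ _)

private theorem wm_exists_ge :
    ∀ (σ : List P) (J : P), J ∈ σ →
      ∃ J', wordMeas lt σ J' ≠ 0 ∧ (J' = J ∨ lt J J')
  | I :: σ, J, hJ => by
    have hI : wordMeas lt (I :: σ) I ≠ 0 := by
      rw [wordMeas_cons]
      simp [Finsupp.single_apply]
    rcases List.mem_cons.mp hJ with rfl | hJσ
    · exact ⟨J, hI, Or.inl rfl⟩
    · by_cases hlt : lt J I
      · exact ⟨I, hI, Or.inr hlt⟩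
      · have hmem : J ∈ σ.filter fun J => @decide (¬ lt J I) (Classical.propDecidable _) :=
          List.mem_filter.mpr ⟨hJσ, by simp [hlt]⟩
        obtain ⟨J', h1, h2⟩ := wm_exists_ge _ J hmem
        refine ⟨J', ?_, h2⟩
        rw [wordMeas_cons]
        simpa using fun _ => h1
termination_by σ => σ.length
decreasing_by
  simp only [List.length_cons]
  exact Nat.lt_succ_of_le (List.length_filter_le _ _)

private theorem wm_below_iff
    (htrans : ∀ p q r : P, lt p q → lt q r → lt p r) (σ : List P) (K : P) :
    (∃ I, wordMeas lt σ I ≠ 0 ∧ lt K I) ↔ ∃ J ∈ σ, lt K J := by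
  constructor
  · rintro ⟨I, h1, h2⟩
    exact ⟨I, wm_support_mem lt σ I h1, h2⟩
  · rintro ⟨J, hJ, hKJ⟩
    obtain ⟨J', h1, h2⟩ := wm_exists_ge lt σ J hJ
    rcases h2 with rfl | h2
    · exact ⟨J', h1, hKJ⟩
    · exact ⟨J', h1, htrans _ _ _ hKJ h2⟩

private theorem wm_filter_apply
    (htrans : ∀ p q r : P, lt p q → lt q r → lt p r) :
    ∀ (σ : List P) (K I : P), ¬ lt K I →
      wordMeas lt (σ.filter fun J => @decide (¬ lt J I) (Classical.propDecidable _)) K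
        = wordMeas lt σ K
  | [], K, I, _ => rfl
  | J :: σ, K, I, hKI => by
    by_cases hJI : lt J I
    · have hKJ : K ≠ J := fun h => hKI (h ▸ hJI)
      have h0 : (Finsupp.single J 1 : P →₀ ℕ) K = 0 :=
        Finsupp.single_eq_of_ne' (Ne.symm hKJ)
      have hKJlt : ¬ lt K J := fun h => hKI (htrans _ _ _ h hJI)
      have hf : ((J :: σ).filter fun J => @decide (¬ lt J I) (Classical.propDecidable _))
          = σ.filter fun J => @decide (¬ lt J I) (Classical.propDecidable _) := by
        simp [List.filter_cons, hJI]
      rw [hf, wordMeas_cons, Finsupp.add_apply, h0, zero_add,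
        wm_filter_apply htrans σ K I hKI, wm_filter_apply htrans σ K J hKJlt]
    · have hf : ((J :: σ).filter fun J => @decide (¬ lt J I) (Classical.propDecidable _))
          = J :: (σ.filter fun J => @decide (¬ lt J I) (Classical.propDecidable _)) := by
        simp [List.filter_cons, hJI]
      rw [hf, wordMeas_cons, wordMeas_cons, Finsupp.add_apply, Finsupp.add_apply]
      congr 1
      rw [List.filter_comm]
      exact wm_filter_apply htrans _ K I hKI
termination_by σ => σ.length
decreasing_by
  all_goals
    simp only [List.length_cons]
    exact Nat.lt_succ_of_le (by first
      | exact List.length_filter_le _ _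
      | exact Nat.le_refl _)

end Aux


/-- Concatenation formula for the word measure: `|σ₁σ₂| = |σ₁| + |σ₂|^(σ₁)`. -/
theorem wordMeas_append {P : Type*} (lt : P → P → Prop)
    (hirr : ∀ p : P, ¬ lt p p)
    (htrans : ∀ p q r : P, lt p q → lt q r → lt p r)
    (hwf : WellFounded lt)
    (σ₁ σ₂ : List P) :
    wordMeas lt (σ₁ ++ σ₂) = wordMeas lt σ₁ + measRestr lt σ₁ (wordMeas lt σ₂) := by
  classical
  match σ₁ with
  | [] =>
    ext K
    simp only [List.nil_append, measRestr, Finsupp.add_apply, Finsupp.filter_apply]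
    have h0 : wordMeas lt ([] : List P) = 0 := by rw [wordMeas]
    rw [h0, Finsupp.coe_zero, Pi.zero_apply, zero_add, if_pos]
    rintro ⟨I, hI, -⟩
    simp at hI
  | I :: σ =>
    rw [List.cons_append, wordMeas_cons, List.filter_append,
      wordMeas_append lt hirr htrans hwf
        (σ.filter fun J => @decide (¬ lt J I) (Classical.propDecidable _))
        (σ₂.filter fun J => @decide (¬ lt J I) (Classical.propDecidable _)),
      wordMeas_cons, add_assoc]
    congr 1
    ext K
    simp only [Finsupp.add_apply, measRestr, Finsupp.filter_apply,
      wm_below_iff lt htrans]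
    by_cases hKI : lt K I
    · rw [if_neg (not_not_intro (⟨I, List.mem_cons_self, hKI⟩ : ∃ J ∈ I :: σ, lt K J))]
      have hnot : wordMeas lt (σ₂.filter fun J =>
          @decide (¬ lt J I) (Classical.propDecidable _)) K = 0 := by
        by_contra h
        have hmem := wm_support_mem lt _ K h
        have := (List.mem_filter.mp hmem).2
        simp [hKI] at this
      congr 1
      split
      · exact hnot
      · rfl
    · have hiff : (∃ J ∈ σ.filter (fun J =>
          @decide (¬ lt J I) (Classical.propDecidable _)), lt K J)
          ↔ (∃ J ∈ I :: σ, lt K J) := by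
        constructor
        · rintro ⟨J, hJ, h⟩
          exact ⟨J, List.mem_cons_of_mem _ (List.mem_filter.mp hJ).1, h⟩
        · rintro ⟨J, hJ, h⟩
          rcases List.mem_cons.mp hJ with rfl | hJσ
          · exact absurd h hKI
          · refine ⟨J, List.mem_filter.mpr ⟨hJσ, ?_⟩, h⟩
            simp only [decide_eq_true_eq]
            intro hJI
            exact hKI (htrans _ _ _ h hJI)
      rw [wm_filter_apply lt htrans σ₂ K I hKI]
      by_cases hc : ∃ J ∈ I :: σ, lt K J
      · rw [if_neg (not_not_intro (hiff.mpr hc)), if_neg (not_not_intro hc)]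
      · rw [if_pos (fun h => hc (hiff.mp h)), if_pos hc]
termination_by σ₁.length
decreasing_by
  simp only [List.length_cons]
  exact Nat.lt_succ_of_le (List.length_filter_le _ _)
end
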